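/- Let W be an N×N real symmetric matrix with nonnegative entries, let g > 0 and H > 0, let a > 0, b, d̄ ∈ ℝ, and suppose g·H·ρ(W) < min{a − d̄, b − d̄}, where ρ(W) is the spectral radius of W. Then for every (real) eigenvalue λ of W, the modal closed-loop matrix [[d̄ + gHλ, −1], [ab, −a]] is Hurwitz (all its complex eigenvalues have strictly negative real part). -/
import Mathlib

open scoped ENNReal NNReal

lemma abs_le_specRad {N : ℕ} (W : Matrix (Fin N) (Fin N) ℝ) {lam : ℝ}
    (hlam : lam ∈ spectrum ℝ W) : |lam| ≤ (spectralRadius ℝ W).toReal := by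
  have hfin : (spectralRadius ℝ W) < ⊤ := by
    rw [spectralRadius, iSup_subtype']
    have : Finite (spectrum ℝ W) := (W.finite_spectrum).to_subtype
    rw [ENNReal.iSup_coe_lt_top]
    exact (Set.finite_range _).bddAbove
  have hle : (‖lam‖₊ : ℝ≥0∞) ≤ spectralRadius ℝ W := by
    exact le_iSup₂ (f := fun (k : ℝ) (_ : k ∈ spectrum ℝ W) => (↑‖k‖₊ : ℝ≥0∞)) lam hlam
  have := ENNReal.toReal_mono hfin.ne hle
  simpa [Real.norm_eq_abs] using this

lemma aeval_charpoly_two (p q r s : ℝ) (z : ℂ) :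
    (Polynomial.aeval z) (!![p, q; r, s] : Matrix (Fin 2) (Fin 2) ℝ).charpoly
      = (z - p) * (z - s) - q * r := by
  rw [Matrix.charpoly, Matrix.det_fin_two]
  simp [Matrix.charmatrix_apply, Matrix.one_apply]

/-- A real square matrix is Hurwitz when all roots of its characteristic
polynomial over `ℂ` have strictly negative real part. -/
def IsHurwitz {n : ℕ} (M : Matrix (Fin n) (Fin n) ℝ) : Prop :=
  ∀ z : ℂ, (Polynomial.aeval z) M.charpoly = 0 → z.re < 0

/-- if `W` is symmetric with nonnegative entries and
`gHρ(W) < min {a − d̄, b − d̄}`, then every modal closed-loop matrix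
`[[d̄ + gHλ, −1], [ab, −a]]`, for `λ` an eigenvalue of `W`, is Hurwitz. -/
theorem perron_mode_margin {N : ℕ} (W : Matrix (Fin N) (Fin N) ℝ)
    (hsymm : W.IsSymm) (hnonneg : ∀ i j, 0 ≤ W i j)
    (g H a b d : ℝ) (hg : 0 < g) (hH : 0 < H) (ha : 0 < a)
    (hmargin : g * H * (spectralRadius ℝ W).toReal < min (a - d) (b - d)) :
    ∀ lam ∈ spectrum ℝ W,
      IsHurwitz (!![d + g * H * lam, -1; a * b, -a] : Matrix (Fin 2) (Fin 2) ℝ) := by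
  intro lam hlam z hz
  have habs : |lam| ≤ (spectralRadius ℝ W).toReal := abs_le_specRad W hlam
  have hgH : 0 < g * H := mul_pos hg hH
  have hbound : g * H * lam < min (a - d) (b - d) := by
    calc g * H * lam ≤ g * H * |lam| := by
          exact mul_le_mul_of_nonneg_left (le_abs_self lam) hgH.le
      _ ≤ g * H * (spectralRadius ℝ W).toReal := by
          exact mul_le_mul_of_nonneg_left habs hgH.le
      _ < min (a - d) (b - d) := hmargin
  set p : ℝ := d + g * H * lam with hp
  have hpa : p - a < 0 := by
    have := lt_of_lt_of_le hbound (min_le_left _ _); linarith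
  have hdet : 0 < a * (b - p) := by
    have := lt_of_lt_of_le hbound (min_le_right _ _)
    exact mul_pos ha (by linarith)
  rw [aeval_charpoly_two] at hz
  -- real and imaginary parts
  have h1 : z.re ^ 2 - z.im ^ 2 - (p - a) * z.re + (a * (b - p)) = 0 := by
    have := congrArg Complex.re hz
    simp [Complex.sub_re, Complex.mul_re, Complex.mul_im, Complex.ofReal_re,
      Complex.ofReal_im] at this
    nlinarith [this]
  have h2 : (2 * z.re - (p - a)) * z.im = 0 := by
    have := congrArg Complex.im hz
    simp [Complex.sub_im, Complex.mul_re, Complex.mul_im, Complex.ofReal_re,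
      Complex.ofReal_im] at this
    nlinarith [this]
  by_contra hre
  push_neg at hre
  rcases mul_eq_zero.mp h2 with h | h
  · nlinarith
  · nlinarith [sq_nonneg z.re]
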